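/- The number of descents of the bit-reversal permutation π_n on [k] (k=2^n, n≥1) is k/2; moreover, the descents are exactly the odd indices, so the major index (sum of descent positions) equals k²/4. Also there is no index j with π_n(j) > π_n(j+1) > π_n(j+2). -/

import Mathlib

/-- The bit-reversal permutation on `n` bits: reverses the binary digits of `j`. -/
def bitrev (n j : ℕ) : ℕ := ∑ i ∈ Finset.range n, (j / 2 ^ i % 2) * 2 ^ (n - 1 - i)

lemma bitrev_succ (n j : ℕ) : bitrev (n+1) j = (j % 2) * 2 ^ n + bitrev n (j / 2) := by
  unfold bitrev
  rw [Finset.sum_range_succ']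
  simp only [pow_zero, Nat.div_one, Nat.add_sub_cancel, Nat.sub_zero]
  rw [add_comm]
  congr 1
  apply Finset.sum_congr rfl
  intro i _
  rw [Nat.div_div_eq_div_mul, ← pow_succ']
  have : n - (i + 1) = n - 1 - i := by omega
  rw [this]

lemma bitrev_lt (n j : ℕ) : bitrev n j < 2 ^ n := by
  induction n generalizing j with
  | zero => simp [bitrev]
  | succ m ih =>
    rw [bitrev_succ, pow_succ]
    have h1 : j % 2 ≤ 1 := by omega
    have := ih (j / 2)
    nlinarith

lemma bitrev_ge_of_odd (m j : ℕ) (hj : Odd j) : 2 ^ m ≤ bitrev (m+1) j := by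
  rw [bitrev_succ, Nat.odd_iff.mp hj, one_mul]
  exact Nat.le_add_right _ _

lemma bitrev_lt_of_even (m j : ℕ) (hj : Even j) : bitrev (m+1) j < 2 ^ m := by
  rw [bitrev_succ, Nat.even_iff.mp hj, zero_mul, zero_add]
  exact bitrev_lt m (j / 2)

lemma bitrev_zero_right (n : ℕ) : bitrev n 0 = 0 := by simp [bitrev]

lemma odd_card_sum (m : ℕ) : ((Finset.range (2*m)).filter (fun i => Odd i)).card = m ∧
    (∑ i ∈ (Finset.range (2*m)).filter (fun i => Odd i), i) = m * m := by
  induction m with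
  | zero => simp
  | succ p ih =>
    have h : 2 * (p + 1) = (2 * p + 1) + 1 := by ring
    rw [h, Finset.range_add_one, Finset.range_add_one, Finset.filter_insert, Finset.filter_insert]
    have h1 : Odd (2 * p + 1) := ⟨p, by ring⟩
    have h2 : ¬ Odd (2 * p) := by simp [Nat.odd_iff]
    simp only [h1, h2, if_true, if_false]
    have hnm : 2 * p + 1 ∉ (Finset.range (2*p)).filter (fun i => Odd i) := by
      simp
    rw [Finset.card_insert_of_notMem hnm, Finset.sum_insert hnm, ih.1, ih.2]
    constructor <;> ring

theorem bitrev_descents (n k : ℕ) (hn : 1 ≤ n) (hk : k = 2 ^ n) :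
    (Finset.filter (fun i => bitrev n ((i + 1) % k) < bitrev n i) (Finset.range k)).card
        = k / 2
    ∧ Finset.filter (fun i => bitrev n ((i + 1) % k) < bitrev n i) (Finset.range k)
        = Finset.filter (fun i => Odd i) (Finset.range k)
    ∧ (∑ i ∈ Finset.filter (fun i => bitrev n ((i + 1) % k) < bitrev n i)
          (Finset.range k), i) = k ^ 2 / 4
    ∧ ¬ ∃ j < k, bitrev n ((j + 1) % k) < bitrev n j
          ∧ bitrev n ((j + 2) % k) < bitrev n ((j + 1) % k) := by
  obtain ⟨m, rfl⟩ : ∃ m, n = m + 1 := ⟨n - 1, by omega⟩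
  have hk2 : k = 2 * 2 ^ m := by rw [hk]; ring
  have hpm : 0 < 2 ^ m := Nat.pow_pos (n := m) (by norm_num)
  have hkpos : 0 < k := by omega
  have hkeven : Even k := ⟨2 ^ m, by omega⟩
  -- descent iff odd
  have key : ∀ i < k, (bitrev (m+1) ((i + 1) % k) < bitrev (m+1) i ↔ Odd i) := by
    intro i hi
    constructor
    · intro hd
      by_contra hodd
      have hie : Even i := Nat.not_odd_iff_even.mp hodd
      have hi1 : i + 1 < k := by
        rcases hie with ⟨a, ha⟩
        rcases hkeven with ⟨b, hb⟩
        omega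
      rw [Nat.mod_eq_of_lt hi1] at hd
      have h1 : bitrev (m+1) i < 2 ^ m := bitrev_lt_of_even m i hie
      have h2 : 2 ^ m ≤ bitrev (m+1) (i+1) := bitrev_ge_of_odd m (i+1) (by
        rcases hie with ⟨a, ha⟩; exact ⟨a, by omega⟩)
      omega
    · intro hodd
      have h1 : 2 ^ m ≤ bitrev (m+1) i := bitrev_ge_of_odd m i hodd
      have h2 : Even ((i+1) % k) := by
        rcases Nat.lt_or_ge (i+1) k with h | h
        · rw [Nat.mod_eq_of_lt h]
          rcases hodd with ⟨a, ha⟩; exact ⟨a+1, by omega⟩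
        · have : i + 1 = k := by omega
          simp [this]
      have h3 : bitrev (m+1) ((i+1) % k) < 2 ^ m := bitrev_lt_of_even m _ h2
      omega
  have hfilter : Finset.filter (fun i => bitrev (m+1) ((i + 1) % k) < bitrev (m+1) i)
      (Finset.range k) = Finset.filter (fun i => Odd i) (Finset.range k) := by
    apply Finset.filter_congr
    intro i hi
    simpa using key i (Finset.mem_range.mp hi)
  have hcs := odd_card_sum (2 ^ m)
  rw [← hk2] at hcs
  refine ⟨?_, hfilter, ?_, ?_⟩
  · rw [hfilter, hcs.1, hk2]; omega
  · rw [hfilter, hcs.2]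
    have : k ^ 2 = (2 ^ m * 2 ^ m) * 4 := by rw [hk2]; ring
    rw [this]; omega
  · rintro ⟨j, hj, hd1, hd2⟩
    have hodd : Odd j := (key j hj).mp hd1
    rcases Nat.lt_or_ge (j+1) k with h | h
    · have hj1e : Even (j+1) := by rcases hodd with ⟨a, ha⟩; exact ⟨a+1, by omega⟩
      have hj2 : j + 2 < k := by
        rcases hodd with ⟨a, ha⟩
        rcases hkeven with ⟨b, hb⟩
        omega
      rw [Nat.mod_eq_of_lt h] at hd2
      rw [Nat.mod_eq_of_lt hj2] at hd2
      have h1 : bitrev (m+1) (j+1) < 2 ^ m := bitrev_lt_of_even m _ hj1e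
      have h2 : 2 ^ m ≤ bitrev (m+1) (j+2) := bitrev_ge_of_odd m _ (by
        rcases hodd with ⟨a, ha⟩; exact ⟨a+1, by omega⟩)
      omega
    · have hjk : j + 1 = k := by omega
      have : (j + 1) % k = 0 := by simp [hjk]
      rw [this, bitrev_zero_right] at hd2
      omega
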